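/- The set of compact star-shaped sets K_S(ℝ^m) is closed in the space of nonempty compact subsets of ℝ^m equipped with the Hausdorff metric: if K_n are compact star-shaped sets and H(K_n, K) → 0 for a nonempty compact K, then K is star-shaped. -/

import Mathlib

open Filter Metric EMetric Topology Set

set_option maxHeartbeats 1000000 in
theorem stmt15 {m : ℕ} (K : ℕ → Set (EuclideanSpace ℝ (Fin m)))
    (L : Set (EuclideanSpace ℝ (Fin m)))
    (hKc : ∀ n, IsCompact (K n))
    (hKstar : ∀ n, ∃ x ∈ K n, StarConvex ℝ x (K n))
    (hLc : IsCompact L) (hLne : L.Nonempty)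
    (h : Tendsto (fun n => hausdorffEdist (K n) L) atTop (𝓝 0)) :
    ∃ x ∈ L, StarConvex ℝ x L := by
  classical
  set ε : ℕ → ENNReal := fun n => hausdorffEdist (K n) L with hε
  choose c hc hstar using hKstar
  -- eventually ε n < 1
  obtain ⟨N, hN⟩ : ∃ N, ∀ n ≥ N, ε n < 1 := by
    have := h.eventually (gt_mem_nhds (by norm_num : (0:ENNReal) < 1))
    exact eventually_atTop.1 this
  -- the centers eventually live in the compact cthickening 1 L
  have hthick : IsCompact (cthickening 1 L) := hLc.cthickening
  have hmem : ∀ k : ℕ, c (k + N) ∈ cthickening 1 L := by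
    intro k
    rw [mem_cthickening_iff]
    calc infEdist (c (k + N)) L ≤ ε (k + N) :=
          infEdist_le_hausdorffEdist_of_mem (hc _)
      _ ≤ ENNReal.ofReal 1 := by
          simpa using (hN (k + N) (Nat.le_add_left _ _)).le
  obtain ⟨x, -, φ, hφ, hxlim⟩ := hthick.tendsto_subseq hmem
  -- ε along the subsequence tends to 0
  have hφtop : Tendsto (fun k => φ k + N) atTop atTop :=
    tendsto_atTop_mono (fun k => le_trans (hφ.id_le k) (Nat.le_add_right _ N)) tendsto_id
  have hεlim : Tendsto (fun k => ε (φ k + N)) atTop (𝓝 0) := h.comp hφtop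
  -- x ∈ L
  have hxL : x ∈ L := by
    rw [← hLc.isClosed.closure_eq, mem_closure_iff_infEdist_zero]
    have h1 : Tendsto (fun k => infEdist (c (φ k + N)) L) atTop (𝓝 (infEdist x L)) :=
      (continuous_infEdist.tendsto x).comp hxlim
    have h2 : Tendsto (fun k => infEdist (c (φ k + N)) L) atTop (𝓝 0) :=
      tendsto_of_tendsto_of_tendsto_of_le_of_le tendsto_const_nhds hεlim
        (fun k => zero_le) (fun k => infEdist_le_hausdorffEdist_of_mem (hc _))
    exact tendsto_nhds_unique h1 h2
  refine ⟨x, hxL, ?_⟩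
  intro y hy a b ha hb hab
  -- pick approximants y_k ∈ K (φ k + N)
  have hyk : ∀ k : ℕ, ∃ z ∈ K (φ k + N), edist y z < ε (φ k + N) + 1 / (k + 1) := by
    intro k
    refine exists_edist_lt_of_hausdorffEdist_lt hy ?_
    rw [hausdorffEdist_comm]
    exact ENNReal.lt_add_right (hN _ (Nat.le_add_left _ _)).ne_top (by simp)
  choose z hz hzlt using hyk
  have hzlim : Tendsto z atTop (𝓝 y) := by
    rw [tendsto_iff_edist_tendsto_0]
    have hd : Tendsto (fun k : ℕ => (1 : ENNReal) / (k + 1)) atTop (𝓝 0) :=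
      by
        simp only [one_div]
        rw [show (0:ENNReal) = ⊤⁻¹ by simp]
        refine ENNReal.tendsto_inv_iff.2 (ENNReal.tendsto_nhds_top_iff_nat.2 fun n => ?_)
        filter_upwards [eventually_ge_atTop n] with k hk
        calc (n : ENNReal) ≤ (k : ENNReal) := by exact_mod_cast hk
          _ < (k : ENNReal) + 1 := ENNReal.lt_add_right (ENNReal.natCast_ne_top k) one_ne_zero
    have hsum : Tendsto (fun k => ε (φ k + N) + 1 / (k + 1 : ENNReal)) atTop (𝓝 0) := by
      simpa using hεlim.add hd
    exact tendsto_of_tendsto_of_tendsto_of_le_of_le tendsto_const_nhds hsum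
      (fun k => zero_le) (fun k => by rw [edist_comm]; exact (hzlt k).le)
  -- the combination
  have hcomb : ∀ k, a • c (φ k + N) + b • z k ∈ K (φ k + N) := fun k =>
    hstar _ (hz k) ha hb hab
  have hcomblim : Tendsto (fun k => a • c (φ k + N) + b • z k) atTop
      (𝓝 (a • x + b • y)) :=
    (hxlim.const_smul a).add (hzlim.const_smul b)
  rw [← hLc.isClosed.closure_eq, mem_closure_iff_infEdist_zero]
  have h1 : Tendsto (fun k => infEdist (a • c (φ k + N) + b • z k) L) atTop
      (𝓝 (infEdist (a • x + b • y) L)) :=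
    (continuous_infEdist.tendsto _).comp hcomblim
  have h2 : Tendsto (fun k => infEdist (a • c (φ k + N) + b • z k) L) atTop (𝓝 0) :=
    tendsto_of_tendsto_of_tendsto_of_le_of_le tendsto_const_nhds hεlim
      (fun k => zero_le) (fun k => infEdist_le_hausdorffEdist_of_mem (hcomb k))
  exact tendsto_nhds_unique h1 h2
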